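/- Fix a point p ∈ S² and lengths α_1,...,α_j ∈ (0,π). The set of endpoints of all spherical polygonal paths starting at p with consecutive spherical edge lengths α_1,...,α_j is invariant under all rotations of S² fixing p, and is of the form {v ∈ S² : d(p,v) ∈ I} for some closed interval I ⊆ [0,π] (a spherical zone centered at p). -/

import Mathlib

set_option maxHeartbeats 1000000

open Real Module
open scoped RealInnerProductSpace

/-- The spherical (geodesic) distance between unit vectors. -/
noncomputable def sdist (u v : EuclideanSpace ℝ (Fin 3)) : ℝ :=
  Real.arccos ⟪u, v⟫


lemma inner_mem_Icc {u v : EuclideanSpace ℝ (Fin 3)} (hu : ‖u‖ = 1) (hv : ‖v‖ = 1) :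
    ⟪u, v⟫ ∈ Set.Icc (-1 : ℝ) 1 := by
  have h := abs_real_inner_le_norm u v
  rw [hu, hv, mul_one] at h
  exact abs_le.mp h

lemma sdist_mem {u v : EuclideanSpace ℝ (Fin 3)} (hu : ‖u‖ = 1) (hv : ‖v‖ = 1) :
    sdist u v ∈ Set.Icc 0 π :=
  ⟨Real.arccos_nonneg _, Real.arccos_le_pi _⟩

lemma cos_sdist {u v : EuclideanSpace ℝ (Fin 3)} (hu : ‖u‖ = 1) (hv : ‖v‖ = 1) :
    Real.cos (sdist u v) = ⟪u, v⟫ :=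
  Real.cos_arccos (inner_mem_Icc hu hv).1 (inner_mem_Icc hu hv).2

lemma sin_sdist (u v : EuclideanSpace ℝ (Fin 3)) :
    Real.sin (sdist u v) = Real.sqrt (1 - ⟪u, v⟫ ^ 2) :=
  Real.sin_arccos _

/-- key triangle-type inequality -/
lemma inner_triangle {u v w : EuclideanSpace ℝ (Fin 3)} (hu : ‖u‖ = 1) (hv : ‖v‖ = 1)
    (hw : ‖w‖ = 1) :
    |⟪v, w⟫ - ⟪v, u⟫ * ⟪u, w⟫| ≤ Real.sqrt (1 - ⟪v, u⟫ ^ 2) * Real.sqrt (1 - ⟪u, w⟫ ^ 2) := by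
  set r := v - ⟪v, u⟫ • u with hr
  set q := w - ⟪u, w⟫ • u with hq
  have huu : ⟪u, u⟫ = (1 : ℝ) := by
    rw [real_inner_self_eq_norm_sq, hu]; norm_num
  have hvv : ⟪v, v⟫ = (1 : ℝ) := by
    rw [real_inner_self_eq_norm_sq, hv]; norm_num
  have hww : ⟪w, w⟫ = (1 : ℝ) := by
    rw [real_inner_self_eq_norm_sq, hw]; norm_num
  have hrq : ⟪r, q⟫ = ⟪v, w⟫ - ⟪v, u⟫ * ⟪u, w⟫ := by
    simp only [hr, hq, inner_sub_left, inner_sub_right, inner_smul_left, inner_smul_right,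
      RCLike.star_def, conj_trivial, huu]
    rw [real_inner_comm u v]
    ring
  have hrr : ‖r‖ = Real.sqrt (1 - ⟪v, u⟫ ^ 2) := by
    have : ‖r‖ ^ 2 = 1 - ⟪v, u⟫ ^ 2 := by
      rw [← real_inner_self_eq_norm_sq]
      simp only [hr, inner_sub_left, inner_sub_right, inner_smul_left, inner_smul_right,
        RCLike.star_def, conj_trivial, huu, hvv]
      rw [real_inner_comm u v]
      ring
    rw [← this, Real.sqrt_sq (norm_nonneg _)]
  have hqq : ‖q‖ = Real.sqrt (1 - ⟪u, w⟫ ^ 2) := by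
    have : ‖q‖ ^ 2 = 1 - ⟪u, w⟫ ^ 2 := by
      rw [← real_inner_self_eq_norm_sq]
      simp only [hq, inner_sub_left, inner_sub_right, inner_smul_left, inner_smul_right,
        RCLike.star_def, conj_trivial, huu, hww]
      rw [real_inner_comm u w]
      ring
    rw [← this, Real.sqrt_sq (norm_nonneg _)]
  calc |⟪v, w⟫ - ⟪v, u⟫ * ⟪u, w⟫| = |⟪r, q⟫| := by rw [hrq]
    _ ≤ ‖r‖ * ‖q‖ := abs_real_inner_le_norm r q
    _ = _ := by rw [hrr, hqq]

lemma exists_unit_perp2 (x y : EuclideanSpace ℝ (Fin 3)) :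
    ∃ e : EuclideanSpace ℝ (Fin 3), ‖e‖ = 1 ∧ ⟪x, e⟫ = 0 ∧ ⟪y, e⟫ = 0 := by
  classical
  set K := Submodule.span ℝ ({x, y} : Set (EuclideanSpace ℝ (Fin 3))) with hK
  have hdim : finrank ℝ (EuclideanSpace ℝ (Fin 3)) = 3 := finrank_euclideanSpace_fin
  have hsum := K.finrank_add_finrank_orthogonal
  have hKle : finrank ℝ K ≤ 2 := by
    have h1 : ((({x, y} : Finset (EuclideanSpace ℝ (Fin 3))) : Set (EuclideanSpace ℝ (Fin 3))).finrank ℝ) ≤ ({x, y} : Finset (EuclideanSpace ℝ (Fin 3))).card :=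
      finrank_span_finset_le_card _
    have h2 : ({x, y} : Finset (EuclideanSpace ℝ (Fin 3))).card ≤ 2 :=
      (Finset.card_insert_le _ _).trans (by simp)
    have h3 : ((({x, y} : Finset (EuclideanSpace ℝ (Fin 3))) : Set (EuclideanSpace ℝ (Fin 3)))) = ({x, y} : Set (EuclideanSpace ℝ (Fin 3))) := by simp
    rw [h3] at h1
    exact h1.trans h2
  have hpos : 0 < finrank ℝ Kᗮ := by omega
  have hne : Kᗮ ≠ ⊥ := by
    intro h
    rw [h] at hpos
    simp [finrank_bot] at hpos
  obtain ⟨v, hvK, hv0⟩ := Submodule.exists_mem_ne_zero_of_ne_bot hne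
  refine ⟨‖v‖⁻¹ • v, ?_, ?_, ?_⟩
  · rw [norm_smul, norm_inv, norm_norm, inv_mul_cancel₀ (norm_ne_zero_iff.mpr hv0)]
  · have := (Submodule.mem_orthogonal K v).mp hvK x (Submodule.subset_span (by simp))
    rw [real_inner_smul_right, this, mul_zero]
  · have := (Submodule.mem_orthogonal K v).mp hvK y (Submodule.subset_span (by simp))
    rw [real_inner_smul_right, this, mul_zero]

lemma inner_self_one {p : EuclideanSpace ℝ (Fin 3)} (hp : ‖p‖ = 1) : ⟪p, p⟫ = (1:ℝ) := by
  rw [real_inner_self_eq_norm_sq, hp]; norm_num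

lemma sdist_eq_of_inner {p u : EuclideanSpace ℝ (Fin 3)} {t : ℝ}
    (h : ⟪p, u⟫ = Real.cos t) (ht0 : 0 ≤ t) (htπ : t ≤ π) : sdist p u = t := by
  unfold sdist; rw [h, Real.arccos_cos ht0 htπ]

lemma norm_combo2 {p e : EuclideanSpace ℝ (Fin 3)}
    (hpp : ⟪p, p⟫ = (1:ℝ)) (hee : ⟪e, e⟫ = (1:ℝ)) (hpe : ⟪p, e⟫ = (0:ℝ))
    (c₁ c₂ : ℝ) (h : c₁ ^ 2 + c₂ ^ 2 = 1) : ‖c₁ • p + c₂ • e‖ = 1 := by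
  have hep : ⟪e, p⟫ = (0:ℝ) := by rw [real_inner_comm]; exact hpe
  have hinner : ⟪c₁ • p + c₂ • e, c₁ • p + c₂ • e⟫ = (1:ℝ) := by
    simp only [inner_add_left, inner_add_right, real_inner_smul_left, real_inner_smul_right,
      hpp, hee, hpe, hep]
    nlinarith [h]
  have h2 : ‖c₁ • p + c₂ • e‖ ^ 2 = 1 := by rw [← real_inner_self_eq_norm_sq, hinner]
  calc ‖c₁ • p + c₂ • e‖ = Real.sqrt (‖c₁ • p + c₂ • e‖ ^ 2) :=
        (Real.sqrt_sq (norm_nonneg _)).symm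
    _ = 1 := by rw [h2, Real.sqrt_one]

/-- norm of a combination of an orthonormal triple -/
lemma norm_combo3 {p e e' : EuclideanSpace ℝ (Fin 3)}
    (hpp : ⟪p, p⟫ = (1:ℝ)) (hee : ⟪e, e⟫ = (1:ℝ)) (hee' : ⟪e', e'⟫ = (1:ℝ))
    (hpe : ⟪p, e⟫ = (0:ℝ)) (hpe' : ⟪p, e'⟫ = (0:ℝ)) (hee'' : ⟪e, e'⟫ = (0:ℝ))
    (c₁ c₂ c₃ : ℝ) (h : c₁ ^ 2 + c₂ ^ 2 + c₃ ^ 2 = 1) :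
    ‖c₁ • p + c₂ • e + c₃ • e'‖ = 1 := by
  have hep : ⟪e, p⟫ = (0:ℝ) := by rw [real_inner_comm]; exact hpe
  have he'p : ⟪e', p⟫ = (0:ℝ) := by rw [real_inner_comm]; exact hpe'
  have he'e : ⟪e', e⟫ = (0:ℝ) := by rw [real_inner_comm]; exact hee''
  have hinner : ⟪c₁ • p + c₂ • e + c₃ • e', c₁ • p + c₂ • e + c₃ • e'⟫ = (1:ℝ) := by
    simp only [inner_add_left, inner_add_right, real_inner_smul_left, real_inner_smul_right,
      hpp, hee, hee', hpe, hpe', hee'', hep, he'p, he'e]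
    nlinarith [h]
  have : ‖c₁ • p + c₂ • e + c₃ • e'‖ ^ 2 = 1 := by
    rw [← real_inner_self_eq_norm_sq, hinner]
  calc ‖c₁ • p + c₂ • e + c₃ • e'‖ = Real.sqrt (‖c₁ • p + c₂ • e + c₃ • e'‖ ^ 2) :=
        (Real.sqrt_sq (norm_nonneg _)).symm
    _ = 1 := by rw [this, Real.sqrt_one]

/-- Claim A : triangle inequalities for spherical distance. -/
lemma sdist_bounds {p u w : EuclideanSpace ℝ (Fin 3)} (hp : ‖p‖ = 1) (hu : ‖u‖ = 1)
    (hw : ‖w‖ = 1) :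
    |sdist p u - sdist u w| ≤ sdist p w ∧
      sdist p w ≤ π - |sdist p u + sdist u w - π| := by
  set t := sdist p u with htdef
  set β := sdist u w with hβdef
  set s := sdist p w with hsdef
  obtain ⟨ht0, htπ⟩ := sdist_mem hp hu
  obtain ⟨hβ0, hβπ⟩ := sdist_mem hu hw
  obtain ⟨hs0, hsπ⟩ := sdist_mem hp hw
  have key : |⟪p, w⟫ - Real.cos t * Real.cos β| ≤ Real.sin t * Real.sin β := by
    rw [htdef, hβdef, cos_sdist hp hu, cos_sdist hu hw, sin_sdist, sin_sdist]
    exact inner_triangle hu hp hw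
  obtain ⟨k1, k2⟩ := abs_le.mp key
  have hcs : Real.cos s = ⟪p, w⟫ := cos_sdist hp hw
  have h1 : Real.cos s ≤ Real.cos (t - β) := by rw [Real.cos_sub, hcs]; linarith
  have h2 : Real.cos (t + β) ≤ Real.cos s := by rw [Real.cos_add, hcs]; linarith
  constructor
  · by_contra hlt
    push_neg at hlt
    have habs : |t - β| ≤ π := abs_le.mpr ⟨by linarith, by linarith⟩
    have := Real.cos_lt_cos_of_nonneg_of_le_pi hs0 habs hlt
    rw [Real.cos_abs] at this
    linarith
  · by_contra hlt
    push_neg at hlt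
    have habs : |t + β - π| ≤ π := abs_le.mpr ⟨by linarith, by linarith⟩
    have h0 : (0:ℝ) ≤ π - |t + β - π| := by linarith
    have := Real.cos_lt_cos_of_nonneg_of_le_pi h0 hsπ hlt
    rw [Real.cos_pi_sub, Real.cos_abs, Real.cos_sub_pi] at this
    linarith

/-- Claim B : existence of a midpoint realizing prescribed distances. -/
lemma exists_mid {p w : EuclideanSpace ℝ (Fin 3)} (hp : ‖p‖ = 1) (hw : ‖w‖ = 1)
    {t β : ℝ} (ht : t ∈ Set.Icc 0 π) (hβ : β ∈ Set.Ioo 0 π)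
    (h1 : |t - β| ≤ sdist p w) (h2 : sdist p w ≤ π - |t + β - π|) :
    ∃ u : EuclideanSpace ℝ (Fin 3), ‖u‖ = 1 ∧ sdist p u = t ∧ sdist u w = β := by
  obtain ⟨ht0, htπ⟩ := ht
  obtain ⟨hβ0, hβπ⟩ := hβ
  set s := sdist p w with hsdef
  obtain ⟨hs0, hsπ⟩ := sdist_mem hp hw
  rw [← hsdef] at hs0 hsπ
  have hcs : Real.cos s = ⟪p, w⟫ := cos_sdist hp hw
  have hpp : ⟪p, p⟫ = (1:ℝ) := inner_self_one hp
  -- degenerate t = 0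
  rcases eq_or_lt_of_le ht0 with ht0' | ht0'
  · have e1 : |t - β| = β := by rw [← ht0', zero_sub, abs_neg, abs_of_pos hβ0]
    have e2 : |t + β - π| = π - β := by
      rw [← ht0', zero_add, abs_of_nonpos (by linarith)]; ring
    have hsβ : s = β := by rw [e1] at h1; rw [e2] at h2; linarith
    refine ⟨p, hp, ?_, ?_⟩
    · exact sdist_eq_of_inner (by rw [hpp, ← ht0', Real.cos_zero]) ht0 htπ
    · exact sdist_eq_of_inner (by rw [← hcs, hsβ]) (le_of_lt hβ0) (le_of_lt hβπ)
  -- degenerate t = π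
  rcases eq_or_lt_of_le htπ with htπ' | htπ'
  · have e1 : |t - β| = π - β := by rw [htπ', abs_of_pos (by linarith)]
    have e2 : |t + β - π| = β := by
      rw [htπ']
      have h3 : π + β - π = β := by ring
      rw [h3, abs_of_pos hβ0]
    have hsβ : s = π - β := by rw [e1] at h1; rw [e2] at h2; linarith
    refine ⟨-p, by rw [norm_neg]; exact hp, ?_, ?_⟩
    · refine sdist_eq_of_inner ?_ ht0 htπ
      rw [inner_neg_right, hpp, htπ', Real.cos_pi]
    · refine sdist_eq_of_inner ?_ (le_of_lt hβ0) (le_of_lt hβπ)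
      rw [inner_neg_left, ← hcs, hsβ, Real.cos_pi_sub, neg_neg]
  -- now 0 < t < π
  have hst : 0 < Real.sin t := Real.sin_pos_of_pos_of_lt_pi ht0' htπ'
  -- degenerate s = 0
  rcases eq_or_lt_of_le hs0 with hs0' | hs0'
  · have hwp : p = w := by
      rw [← inner_eq_one_iff_of_norm_eq_one (𝕜 := ℝ) hp hw, ← hcs, ← hs0', Real.cos_zero]
    have htβ : t = β := by
      rw [← hs0'] at h1
      have h3 := abs_nonpos_iff.mp h1
      linarith [sub_eq_zero.mp h3]
    obtain ⟨e, he1, hpe, -⟩ := exists_unit_perp2 p p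
    have hee : ⟪e, e⟫ = (1:ℝ) := inner_self_one he1
    have hep : ⟪e, p⟫ = (0:ℝ) := by rw [real_inner_comm]; exact hpe
    refine ⟨Real.cos t • p + Real.sin t • e, ?_, ?_, ?_⟩
    · exact norm_combo2 hpp hee hpe _ _ (by nlinarith [Real.sin_sq_add_cos_sq t])
    · refine sdist_eq_of_inner ?_ ht0 htπ
      simp only [inner_add_right, real_inner_smul_right, hpp, hpe]
      ring
    · refine sdist_eq_of_inner ?_ (le_of_lt hβ0) (le_of_lt hβπ)
      rw [← htβ, ← hwp]
      simp only [inner_add_left, real_inner_smul_left, hpp, hep]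
      ring
  -- degenerate s = π
  rcases eq_or_lt_of_le hsπ with hsπ' | hsπ'
  · have hwp : -p = w := by
      rw [← inner_eq_one_iff_of_norm_eq_one (𝕜 := ℝ) (by rw [norm_neg]; exact hp) hw, inner_neg_left,
        ← hcs, hsπ', Real.cos_pi, neg_neg]
    have htβ : t + β = π := by
      rw [hsπ'] at h2
      have h2' : |t + β - π| ≤ 0 := by linarith
      have h3 := abs_nonpos_iff.mp h2'
      linarith [sub_eq_zero.mp h3]
    obtain ⟨e, he1, hpe, -⟩ := exists_unit_perp2 p p
    have hee : ⟪e, e⟫ = (1:ℝ) := inner_self_one he1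
    have hep : ⟪e, p⟫ = (0:ℝ) := by rw [real_inner_comm]; exact hpe
    refine ⟨Real.cos t • p + Real.sin t • e, ?_, ?_, ?_⟩
    · exact norm_combo2 hpp hee hpe _ _ (by nlinarith [Real.sin_sq_add_cos_sq t])
    · refine sdist_eq_of_inner ?_ ht0 htπ
      simp only [inner_add_right, real_inner_smul_right, hpp, hpe]
      ring
    · refine sdist_eq_of_inner ?_ (le_of_lt hβ0) (le_of_lt hβπ)
      have hβeq : β = π - t := by linarith
      rw [← hwp, hβeq, Real.cos_pi_sub]
      simp only [inner_neg_right, inner_add_left, real_inner_smul_left, hpp, hep]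
      ring
  -- main case : 0 < s < π, 0 < t < π
  have hss : 0 < Real.sin s := Real.sin_pos_of_pos_of_lt_pi hs0' hsπ'
  -- cosine bounds
  have hc1 : Real.cos s ≤ Real.cos (t - β) := by
    rw [← Real.cos_abs (t - β)]
    exact Real.cos_le_cos_of_nonneg_of_le_pi (abs_nonneg _) hsπ h1
  have hc2 : Real.cos (t + β) ≤ Real.cos s := by
    have h3 := Real.cos_le_cos_of_nonneg_of_le_pi hs0
      (sub_le_self π (abs_nonneg (t + β - π))) h2
    rwa [Real.cos_pi_sub, Real.cos_abs, Real.cos_sub_pi, neg_neg] at h3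
  rw [Real.cos_sub] at hc1
  rw [Real.cos_add] at hc2
  have key : (Real.cos β - Real.cos t * Real.cos s) ^ 2
      ≤ (Real.sin t * Real.sin s) ^ 2 := by
    nlinarith [Real.sin_sq t, Real.sin_sq β, Real.sin_sq s]
  -- construct the frame
  set e : EuclideanSpace ℝ (Fin 3) := (Real.sin s)⁻¹ • (w - Real.cos s • p) with hedef
  have hpe : ⟪p, e⟫ = (0:ℝ) := by
    rw [hedef, real_inner_smul_right, inner_sub_right, real_inner_smul_right, hpp, ← hcs]
    ring
  have hx : ⟪w - Real.cos s • p, w - Real.cos s • p⟫ = Real.sin s ^ 2 := by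
    have h4 : ⟪w, w⟫ = (1:ℝ) := inner_self_one hw
    have h5 : ⟪w, p⟫ = Real.cos s := by rw [real_inner_comm]; exact hcs.symm
    have h6 : ⟪p, w⟫ = Real.cos s := hcs.symm
    have h9 := Real.sin_sq s
    simp only [inner_sub_left, inner_sub_right, real_inner_smul_left, real_inner_smul_right,
      hpp, h4, h5, h6]
    nlinarith [h9]
  have hee : ⟪e, e⟫ = (1:ℝ) := by
    rw [hedef, real_inner_smul_left, real_inner_smul_right, hx]
    field_simp
  have hwe : w = Real.cos s • p + Real.sin s • e := by
    rw [hedef, smul_smul, mul_inv_cancel₀ (ne_of_gt hss), one_smul]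
    abel
  clear hx
  clear_value e
  clear hedef
  obtain ⟨e', he'1, hpe', hee''⟩ := exists_unit_perp2 p e
  have hee' : ⟪e', e'⟫ = (1:ℝ) := inner_self_one he'1
  have hep : ⟪e, p⟫ = (0:ℝ) := by rw [real_inner_comm]; exact hpe
  have he'p : ⟪e', p⟫ = (0:ℝ) := by rw [real_inner_comm]; exact hpe'
  have he'e : ⟪e', e⟫ = (0:ℝ) := by rw [real_inner_comm]; exact hee''
  set c : ℝ := (Real.cos β - Real.cos t * Real.cos s) / (Real.sin t * Real.sin s) with hcdef
  have hstss : 0 < Real.sin t * Real.sin s := mul_pos hst hss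
  have hcsq : c ^ 2 ≤ 1 := by
    rw [hcdef, div_pow, div_le_one (by positivity)]
    exact key
  have hc1' : 0 ≤ 1 - c ^ 2 := by linarith
  refine ⟨Real.cos t • p + (Real.sin t * c) • e + (Real.sin t * Real.sqrt (1 - c ^ 2)) • e',
    ?_, ?_, ?_⟩
  · refine norm_combo3 hpp hee hee' hpe hpe' hee'' _ _ _ ?_
    have hsq := Real.sq_sqrt hc1'
    nlinarith [Real.sin_sq_add_cos_sq t]
  · refine sdist_eq_of_inner ?_ ht0 htπ
    simp only [inner_add_right, real_inner_smul_right, hpp, hpe, hpe']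
    ring
  · refine sdist_eq_of_inner ?_ (le_of_lt hβ0) (le_of_lt hβπ)
    rw [hwe]
    simp only [inner_add_left, inner_add_right, real_inner_smul_left, real_inner_smul_right,
      hpp, hee, hee', hpe, hpe', hee'', hep, he'p, he'e]
    rw [hcdef]
    field_simp
    ring

/-- one step of the induction: a zone stepped by distance β is a zone. -/
lemma stepZone (p : EuclideanSpace ℝ (Fin 3)) (hp : ‖p‖ = 1) {β : ℝ} (hβ : β ∈ Set.Ioo 0 π)
    {a b : ℝ} (h0 : 0 ≤ a) (hab : a ≤ b) (hbπ : b ≤ π) :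
    ∃ a' b' : ℝ, 0 ≤ a' ∧ a' ≤ b' ∧ b' ≤ π ∧
      ∀ w : EuclideanSpace ℝ (Fin 3),
        (‖w‖ = 1 ∧ ∃ u : EuclideanSpace ℝ (Fin 3),
            ‖u‖ = 1 ∧ sdist p u ∈ Set.Icc a b ∧ sdist u w = β) ↔
        (‖w‖ = 1 ∧ sdist p w ∈ Set.Icc a' b') := by
  set F : ℝ → ℝ := fun t => |t - β| with hF
  set G : ℝ → ℝ := fun t => π - |t + β - π| with hG
  have hFc : Continuous F := continuous_abs.comp (continuous_id.sub continuous_const)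
  have hGc : Continuous G :=
    continuous_const.sub (continuous_abs.comp (by continuity))
  have hFG : ∀ t ∈ Set.Icc a b, F t ≤ G t := by
    intro t htm
    obtain ⟨ht1, ht2⟩ := htm
    have h1 : 0 ≤ t := le_trans h0 ht1
    have h2 : t ≤ π := le_trans ht2 hbπ
    obtain ⟨hβ0, hβπ⟩ := hβ
    simp only [hF, hG]
    rcases abs_cases (t - β) with ⟨e1, -⟩ | ⟨e1, -⟩ <;>
      rcases abs_cases (t + β - π) with ⟨e2, -⟩ | ⟨e2, -⟩ <;> rw [e1, e2] <;> linarith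
  have hne : (Set.Icc a b).Nonempty := ⟨a, le_refl a, hab⟩
  obtain ⟨t₁, ht₁m, ht₁⟩ := isCompact_Icc.exists_isMinOn hne hFc.continuousOn
  obtain ⟨t₂, ht₂m, ht₂⟩ := isCompact_Icc.exists_isMaxOn hne hGc.continuousOn
  refine ⟨F t₁, G t₂, abs_nonneg _, ?_, ?_, ?_⟩
  · exact le_trans (ht₁ ht₂m) (hFG t₂ ht₂m)
  · exact sub_le_self π (abs_nonneg _)
  · intro w
    constructor
    · rintro ⟨hw, u, hu, htu, hβu⟩
      refine ⟨hw, ?_, ?_⟩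
      · have h3 := (sdist_bounds hp hu hw).1
        rw [hβu] at h3
        exact le_trans (ht₁ htu) h3
      · have h3 := (sdist_bounds hp hu hw).2
        rw [hβu] at h3
        exact le_trans h3 (ht₂ htu)
    · rintro ⟨hw, hs1, hs2⟩
      refine ⟨hw, ?_⟩
      set s := sdist p w with hsdef
      -- find t in [a,b] with F t ≤ s ≤ G t
      have hIcc : Set.Icc a b ⊆ Set.Icc 0 π := Set.Icc_subset_Icc h0 hbπ
      obtain ⟨t, htm, hFt, hGt⟩ : ∃ t ∈ Set.Icc a b, F t ≤ s ∧ s ≤ G t := by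
        by_cases hcase : F t₂ ≤ s
        · exact ⟨t₂, ht₂m, hcase, hs2⟩
        · push_neg at hcase
          have hmem : s ∈ Set.uIcc (F t₁) (F t₂) := by
            rw [Set.uIcc_of_le (by linarith [ht₁ ht₂m])]
            exact ⟨hs1, le_of_lt hcase⟩
          obtain ⟨t, htm', hFt⟩ := intermediate_value_uIcc
            (hFc.continuousOn (s := Set.uIcc t₁ t₂)) hmem
          have htm : t ∈ Set.Icc a b := Set.uIcc_subset_Icc ht₁m ht₂m htm'
          exact ⟨t, htm, le_of_eq hFt, hFt ▸ hFG t htm⟩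
      obtain ⟨u, hu, hput, hsβ⟩ := exists_mid hp hw (hIcc htm) hβ hFt hGt
      exact ⟨u, hu, hput ▸ htm, hsβ⟩

lemma zone_aux (j : ℕ) (p : EuclideanSpace ℝ (Fin 3)) (hp : ‖p‖ = 1)
    (α : Fin j → ℝ) (hα : ∀ k : Fin j, α k ∈ Set.Ioo 0 π) :
    ∃ a b : ℝ, 0 ≤ a ∧ a ≤ b ∧ b ≤ π ∧
      {w | ∃ f : Fin (j + 1) → EuclideanSpace ℝ (Fin 3),
        f 0 = p ∧ (∀ k : Fin (j + 1), ‖f k‖ = 1) ∧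
        (∀ k : Fin j, sdist (f k.castSucc) (f k.succ) = α k) ∧
        f (Fin.last j) = w} = {w | ‖w‖ = 1 ∧ sdist p w ∈ Set.Icc a b} := by
  induction j with
  | zero =>
    refine ⟨0, 0, le_refl 0, le_refl 0, le_of_lt Real.pi_pos, ?_⟩
    ext w
    simp only [Set.mem_setOf_eq]
    constructor
    · rintro ⟨f, hf0, hfn, -, hfl⟩
      have hwp : w = p := by rw [← hfl, ← hf0]; rfl
      subst hwp
      refine ⟨hp, ?_⟩
      have : sdist w w = 0 := by
        unfold sdist; rw [inner_self_one hp, Real.arccos_one]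
      rw [this]; exact ⟨le_refl 0, le_refl 0⟩
    · rintro ⟨hw, hs1, hs2⟩
      have hs : sdist p w = 0 := le_antisymm hs2 hs1
      have hpw : p = w := by
        rw [← inner_eq_one_iff_of_norm_eq_one (𝕜 := ℝ) hp hw]
        rw [← cos_sdist hp hw, hs, Real.cos_zero]
      exact ⟨fun _ => p, rfl, fun _ => hp, fun k => k.elim0, hpw⟩
  | succ j ih =>
    set β := α (Fin.last j) with hβdef
    obtain ⟨a, b, h0, hab, hbπ, hzone⟩ := ih (fun k => α k.castSucc) (fun k => hα _)
    obtain ⟨a', b', h0', hab', hbπ', hstep⟩ := stepZone p hp (hα (Fin.last j)) h0 hab hbπ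
    refine ⟨a', b', h0', hab', hbπ', ?_⟩
    ext w
    simp only [Set.mem_setOf_eq]
    rw [← hstep w]
    constructor
    · rintro ⟨f, hf0, hfn, hfe, hfl⟩
      refine ⟨hfl ▸ hfn (Fin.last (j+1)), f ((Fin.last j).castSucc), hfn _, ?_, ?_⟩
      · -- the truncated path lies in the zone for j
        have hmem : f ((Fin.last j).castSucc) ∈
            {w | ‖w‖ = 1 ∧ sdist p w ∈ Set.Icc a b} := by
          rw [← hzone]
          refine ⟨fun k => f k.castSucc, ?_, fun k => hfn _, ?_, rfl⟩
          · show f ((0 : Fin (j+1)).castSucc) = p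
            rw [Fin.castSucc_zero]; exact hf0
          · intro k
            exact hfe k.castSucc
        exact hmem.2
      · have := hfe (Fin.last j)
        rw [Fin.succ_last, hfl] at this
        exact this
    · rintro ⟨hw, u, hu, hum, huw⟩
      have hmem : u ∈ {w | ∃ f : Fin (j + 1) → EuclideanSpace ℝ (Fin 3),
          f 0 = p ∧ (∀ k : Fin (j + 1), ‖f k‖ = 1) ∧
          (∀ k : Fin j, sdist (f k.castSucc) (f k.succ) = α k.castSucc) ∧
          f (Fin.last j) = u} := by
        exact (Set.ext_iff.mp hzone u).mpr ⟨hu, hum⟩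
      obtain ⟨g, hg0, hgn, hge, hgl⟩ := hmem
      refine ⟨Fin.snoc g w, ?_, ?_, ?_, ?_⟩
      · rw [show (0 : Fin (j+2)) = (0 : Fin (j+1)).castSucc by rw [Fin.castSucc_zero],
          Fin.snoc_castSucc]
        exact hg0
      · intro k
        induction k using Fin.lastCases with
        | last => rw [Fin.snoc_last]; exact hw
        | cast i => rw [Fin.snoc_castSucc]; exact hgn i
      · intro k
        induction k using Fin.lastCases with
        | last =>
          rw [Fin.succ_last, Fin.snoc_last, Fin.snoc_castSucc, hgl]
          exact huw
        | cast i =>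
          rw [show (i.castSucc.succ : Fin (j+2)) = i.succ.castSucc from rfl,
            Fin.snoc_castSucc, Fin.snoc_castSucc]
          exact hge i
      · rw [Fin.snoc_last]

lemma sdist_map (R : EuclideanSpace ℝ (Fin 3) ≃ₗᵢ[ℝ] EuclideanSpace ℝ (Fin 3))
    (u v : EuclideanSpace ℝ (Fin 3)) : sdist (R u) (R v) = sdist u v := by
  unfold sdist
  rw [LinearIsometryEquiv.inner_map_map]

/-- Let `S` be the set of endpoints of all spherical polygonal paths on the unit sphere
starting at a unit vector `p` with consecutive spherical edge lengths
`α 1, …, α j ∈ (0,π)`. Then `S` is invariant under every rotation (linear isometry) of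
the sphere fixing `p`, and `S` is a spherical zone centered at `p`: the set of unit
vectors whose spherical distance to `p` lies in some closed interval `I ⊆ [0,π]`. -/
theorem endpoint_set_is_spherical_zone {j : ℕ}
    (p : EuclideanSpace ℝ (Fin 3)) (hp : ‖p‖ = 1)
    (α : Fin j → ℝ) (hα : ∀ k : Fin j, α k ∈ Set.Ioo 0 π)
    (S : Set (EuclideanSpace ℝ (Fin 3)))
    (hS : S = {w | ∃ f : Fin (j + 1) → EuclideanSpace ℝ (Fin 3),
      f 0 = p ∧ (∀ k : Fin (j + 1), ‖f k‖ = 1) ∧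
      (∀ k : Fin j, sdist (f k.castSucc) (f k.succ) = α k) ∧
      f (Fin.last j) = w}) :
    (∀ R : EuclideanSpace ℝ (Fin 3) ≃ₗᵢ[ℝ] EuclideanSpace ℝ (Fin 3),
        R p = p → R '' S = S) ∧
    ∃ a b : ℝ, 0 ≤ a ∧ b ≤ π ∧
      S = {w | ‖w‖ = 1 ∧ sdist p w ∈ Set.Icc a b} := by
  have hinv : ∀ R : EuclideanSpace ℝ (Fin 3) ≃ₗᵢ[ℝ] EuclideanSpace ℝ (Fin 3),
      R p = p → R '' S ⊆ S := by
    intro R hRp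
    rintro w ⟨v, hvS, rfl⟩
    rw [hS] at hvS ⊢
    obtain ⟨f, hf0, hfn, hfe, hfl⟩ := hvS
    refine ⟨fun k => R (f k), by show R (f 0) = p; rw [hf0]; exact hRp,
      fun k => by rw [LinearIsometryEquiv.norm_map]; exact hfn k,
      fun k => by rw [sdist_map]; exact hfe k,
      by show R (f (Fin.last j)) = R v; rw [hfl]⟩
  constructor
  · intro R hRp
    apply subset_antisymm (hinv R hRp)
    intro w hwS
    have hsymm : R.symm p = p := by
      conv_lhs => rw [← hRp]
      rw [LinearIsometryEquiv.symm_apply_apply]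
    have h2 : R.symm w ∈ S := hinv R.symm hsymm ⟨w, hwS, rfl⟩
    exact ⟨R.symm w, h2, by simp⟩
  · obtain ⟨a, b, h0, -, hbπ, hzone⟩ := zone_aux j p hp α hα
    exact ⟨a, b, h0, hbπ, hS.trans hzone⟩
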